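/- Fix real α, β, η with α > 0, and for q ∈ ℝ define the 2×2 real matrix M(q) with first row (β + 1 − α(η+1)q, −β + αηq) and second row (1, 0). For any ρ > 0, the set { q ∈ ℝ : spectral radius of M(q) < ρ } is an interval (possibly empty). Consequently q ↦ spectral radius of M(q) is quasiconvex. -/

import Mathlib

private lemma lin_interp {a c x y z : ℝ} (hxz : x ≤ z) (hzy : z ≤ y)
    (hx : a * x + c < 0) (hy : a * y + c < 0) : a * z + c < 0 := by
  rcases le_total a 0 with h | h
  · nlinarith [mul_nonneg (neg_nonneg.2 h) (sub_nonneg.2 hxz)]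
  · nlinarith [mul_nonneg h (sub_nonneg.2 hzy)]

private lemma roots_exist (T S : ℝ) : ∃ r1 r2 : ℂ,
    r1 + r2 = (T : ℂ) ∧ r1 * r2 = ((-S : ℝ) : ℂ) ∧
    (r2 = (starRingEnd ℂ) r1 ∨ (r1.im = 0 ∧ r2.im = 0)) := by
  by_cases hD : 0 ≤ T ^ 2 + 4 * S
  · have h : ((Real.sqrt (T ^ 2 + 4 * S) : ℝ) : ℂ) ^ 2 = (T : ℂ) ^ 2 + 4 * (S : ℂ) := by
      have := Real.sq_sqrt hD
      exact_mod_cast congrArg (Complex.ofReal) this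
    refine ⟨(((T + Real.sqrt (T ^ 2 + 4 * S)) / 2 : ℝ) : ℂ),
      (((T - Real.sqrt (T ^ 2 + 4 * S)) / 2 : ℝ) : ℂ), ?_, ?_, Or.inr ⟨by simp, by simp⟩⟩
    · push_cast; ring
    · push_cast
      linear_combination (-(1:ℂ)/4) * h
  · push_neg at hD
    have h : ((Real.sqrt (-(T ^ 2 + 4 * S)) : ℝ) : ℂ) ^ 2 = -((T : ℂ) ^ 2 + 4 * (S : ℂ)) := by
      have := Real.sq_sqrt (by linarith : (0:ℝ) ≤ -(T ^ 2 + 4 * S))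
      exact_mod_cast congrArg (Complex.ofReal) this
    refine ⟨(T / 2 : ℝ) + Complex.I * (Real.sqrt (-(T ^ 2 + 4 * S)) / 2 : ℝ),
      (T / 2 : ℝ) - Complex.I * (Real.sqrt (-(T ^ 2 + 4 * S)) / 2 : ℝ), ?_, ?_, Or.inl ?_⟩
    · push_cast; ring
    · push_cast
      linear_combination ((1:ℂ)/4) * h - Complex.I_sq * (((Real.sqrt (-(T^2+4*S)) : ℝ) : ℂ)^2 / 4)
    · simp only [map_add, map_mul, Complex.conj_ofReal, Complex.conj_I]
      ring

private lemma jury_real {x y ρ : ℝ} (hρ : 0 < ρ) :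
    (|x| < ρ ∧ |y| < ρ) ↔
      (|x*y| < ρ^2 ∧ (x+y)*ρ < ρ^2 + x*y ∧ -((x+y)*ρ) < ρ^2 + x*y) := by
  rw [abs_lt, abs_lt, abs_lt]
  constructor
  · rintro ⟨⟨hx1, hx2⟩, ⟨hy1, hy2⟩⟩
    refine ⟨⟨?_, ?_⟩, ?_, ?_⟩ <;>
      nlinarith [mul_pos (sub_pos.2 hx2) (sub_pos.2 hy2),
        mul_pos (by linarith : (0:ℝ) < ρ + x) (by linarith : (0:ℝ) < ρ + y),
        mul_pos (sub_pos.2 hx2) (by linarith : (0:ℝ) < ρ + y),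
        mul_pos (by linarith : (0:ℝ) < ρ + x) (sub_pos.2 hy2)]
  · rintro ⟨⟨h1a, h1b⟩, h2, h3⟩
    have aux : ∀ u v : ℝ, u*v < ρ^2 → (u+v)*ρ < ρ^2 + u*v → u < ρ := by
      intro u v hA hB
      by_contra h
      push_neg at h
      have h4 : 0 < ρ * (2*ρ - u - v) := by nlinarith
      have hv : v < ρ := by nlinarith [mul_nonneg hρ.le (sub_nonneg.2 h)]
      nlinarith [mul_nonneg (sub_nonneg.2 h) (sub_nonneg.2 hv.le)]
    have hxy : y * x = x * y := by ring
    have hxy2 : (-x) * (-y) = x * y := by ring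
    have hyx2 : (-y) * (-x) = x * y := by ring
    refine ⟨⟨?_, ?_⟩, ?_, ?_⟩
    · have := aux (-x) (-y) (by linarith [hxy2] : (-x)*(-y) < ρ^2) (by nlinarith)
      linarith
    · exact aux x y h1b h2
    · have := aux (-y) (-x) (by linarith [hyx2] : (-y)*(-x) < ρ^2) (by nlinarith)
      linarith
    · exact aux y x (by linarith [hxy]) (by nlinarith)

private lemma jury {T S ρ : ℝ} (hρ : 0 < ρ) {r1 r2 : ℂ}
    (hsum : r1 + r2 = (T : ℂ)) (hprod : r1 * r2 = ((-S : ℝ) : ℂ))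
    (hc : r2 = (starRingEnd ℂ) r1 ∨ (r1.im = 0 ∧ r2.im = 0)) :
    (‖r1‖ < ρ ∧ ‖r2‖ < ρ) ↔
      (|S| < ρ^2 ∧ T*ρ < ρ^2 - S ∧ -(T*ρ) < ρ^2 - S) := by
  rcases hc with hc | ⟨h1, h2⟩
  · subst hc
    have hns : Complex.normSq r1 = -S := by
      rw [Complex.mul_conj] at hprod
      exact_mod_cast hprod
    have hT : T = 2 * r1.re := by
      rw [Complex.add_conj] at hsum
      exact_mod_cast hsum.symm
    have hnc : ‖(starRingEnd ℂ) r1‖ = ‖r1‖ := by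
      rw [Complex.norm_conj]
    have hn2 : ‖r1‖^2 = -S := by
      rw [Complex.sq_norm, hns]
    have hre : |r1.re| ≤ ‖r1‖ := by
      exact Complex.abs_re_le_norm r1
    rw [hnc, and_self]
    constructor
    · intro hn
      have h0 : 0 ≤ ‖r1‖ := norm_nonneg r1
      refine ⟨?_, ?_, ?_⟩
      · rw [abs_lt]; constructor <;> nlinarith
      · nlinarith [mul_nonneg hρ.le (by linarith [le_abs_self r1.re] : (0:ℝ) ≤ ‖r1‖ - r1.re),
          mul_pos (sub_pos.2 hn) (sub_pos.2 hn)]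
      · nlinarith [mul_nonneg hρ.le (by linarith [neg_le_abs r1.re] : (0:ℝ) ≤ ‖r1‖ + r1.re),
          mul_pos (sub_pos.2 hn) (sub_pos.2 hn)]
    · rintro ⟨hS, -, -⟩
      rw [abs_lt] at hS
      nlinarith [norm_nonneg r1]
  · have hr1 : r1 = (r1.re : ℂ) := Complex.ext rfl (by simp [h1])
    have hr2 : r2 = (r2.re : ℂ) := Complex.ext rfl (by simp [h2])
    set x := r1.re; set y := r2.re
    have hT : x + y = T := by
      rw [hr1, hr2] at hsum; exact_mod_cast hsum
    have hS : x * y = -S := by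
      rw [hr1, hr2] at hprod; exact_mod_cast hprod
    have hSx : S = -(x*y) := by linarith
    rw [hr1, hr2, Complex.norm_real, Complex.norm_real, Real.norm_eq_abs, Real.norm_eq_abs,
      ← hT, hSx]
    have habs : |(-(x*y))| = |x*y| := abs_neg _
    rw [habs]
    have h2' : ρ^2 - -(x*y) = ρ^2 + x*y := by ring
    rw [h2']
    exact jury_real hρ

private lemma spectrum_char {T S : ℝ} {A : Matrix (Fin 2) (Fin 2) ℂ}
    (hA : A = !![(T : ℂ), (S : ℂ); 1, 0]) {r1 r2 : ℂ}
    (hsum : r1 + r2 = (T : ℂ)) (hprod : r1 * r2 = ((-S : ℝ) : ℂ)) :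
    spectrum ℂ A = {r1, r2} := by
  ext lam
  rw [spectrum.mem_iff, Matrix.isUnit_iff_isUnit_det, isUnit_iff_ne_zero, not_not]
  have hdet : ((algebraMap ℂ (Matrix (Fin 2) (Fin 2) ℂ)) lam - A).det
      = (lam - r1) * (lam - r2) := by
    rw [hA, Matrix.det_fin_two]
    simp only [Matrix.sub_apply, Matrix.algebraMap_matrix_apply]
    norm_num
    push_cast at hprod
    linear_combination lam * hsum - hprod
  rw [hdet, mul_eq_zero, sub_eq_zero, sub_eq_zero]
  simp [Set.mem_insert_iff]

private lemma rad_eq {A : Matrix (Fin 2) (Fin 2) ℂ} {r1 r2 : ℂ}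
    (hspec : spectrum ℂ A = {r1, r2}) :
    spectralRadius ℂ A = (‖r1‖₊ : ENNReal) ⊔ (‖r2‖₊ : ENNReal) := by
  rw [spectralRadius, hspec, iSup_pair]

theorem stmt_3 (α β η : ℝ) (hα : 0 < α)
    (M : ℝ → Matrix (Fin 2) (Fin 2) ℝ)
    (hM : ∀ q : ℝ, M q = !![β + 1 - α * (η + 1) * q, -β + α * η * q; 1, 0]) :
    (∀ ρ : ℝ, 0 < ρ →
      {q : ℝ | spectralRadius ℂ ((M q).map (Complex.ofReal)) < ENNReal.ofReal ρ}.OrdConnected) ∧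
    QuasiconvexOn ℝ Set.univ (fun q : ℝ => spectralRadius ℂ ((M q).map (Complex.ofReal))) := by
  have hmap : ∀ q : ℝ, (M q).map Complex.ofReal
      = !![((β + 1 - α * (η + 1) * q : ℝ) : ℂ), ((-β + α * η * q : ℝ) : ℂ); 1, 0] := by
    intro q
    rw [hM q]
    ext i j
    fin_cases i <;> fin_cases j <;> simp [Matrix.map_apply]
  -- master characterization
  have key : ∀ q : ℝ, spectralRadius ℂ ((M q).map Complex.ofReal) ≠ ⊤ ∧
      ∀ ρ : ℝ, 0 < ρ →
        (spectralRadius ℂ ((M q).map Complex.ofReal) < ENNReal.ofReal ρ ↔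
          (|(-β + α * η * q)| < ρ^2 ∧
            (β + 1 - α * (η + 1) * q) * ρ < ρ^2 - (-β + α * η * q) ∧
            -((β + 1 - α * (η + 1) * q) * ρ) < ρ^2 - (-β + α * η * q))) := by
    intro q
    obtain ⟨r1, r2, hsum, hprod, hc⟩ := roots_exist (β + 1 - α * (η + 1) * q) (-β + α * η * q)
    have hspec := spectrum_char (hmap q) hsum hprod
    have hrad := rad_eq hspec
    constructor
    · rw [hrad]
      exact (sup_lt_iff.2 ⟨ENNReal.coe_lt_top, ENNReal.coe_lt_top⟩).ne
    · intro ρ hρ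
      rw [hrad, sup_lt_iff, ENNReal.lt_ofReal_iff_toReal_lt ENNReal.coe_ne_top,
        ENNReal.lt_ofReal_iff_toReal_lt ENNReal.coe_ne_top, ENNReal.coe_toReal,
        ENNReal.coe_toReal, coe_nnnorm, coe_nnnorm]
      exact jury hρ hsum hprod hc
  have part1 : ∀ ρ : ℝ, 0 < ρ →
      {q : ℝ | spectralRadius ℂ ((M q).map (Complex.ofReal)) < ENNReal.ofReal ρ}.OrdConnected := by
    intro ρ hρ
    have e1a : ∀ q : ℝ, (α*η)*q + (-β - ρ^2) = (-β + α*η*q) - ρ^2 := fun q => by ring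
    have e1b : ∀ q : ℝ, (-(α*η))*q + (β - ρ^2) = -ρ^2 - (-β + α*η*q) := fun q => by ring
    have e2 : ∀ q : ℝ, (α*η - α*(η+1)*ρ)*q + ((β+1)*ρ - ρ^2 - β)
        = (β + 1 - α*(η+1)*q)*ρ - (ρ^2 - (-β + α*η*q)) := fun q => by ring
    have e3 : ∀ q : ℝ, (α*η + α*(η+1)*ρ)*q + (-((β+1)*ρ) - ρ^2 - β)
        = -((β + 1 - α*(η+1)*q)*ρ) - (ρ^2 - (-β + α*η*q)) := fun q => by ring
    refine ⟨fun x hx y hy z hz => ?_⟩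
    simp only [Set.mem_setOf_eq] at hx hy ⊢
    rw [(key z).2 ρ hρ]
    rw [(key x).2 ρ hρ] at hx
    rw [(key y).2 ρ hρ] at hy
    obtain ⟨hx1, hx2, hx3⟩ := hx
    obtain ⟨hy1, hy2, hy3⟩ := hy
    rw [abs_lt] at hx1 hy1
    have g1a := lin_interp (a := α*η) (c := -β - ρ^2) hz.1 hz.2
      (by linarith [e1a x, hx1.2]) (by linarith [e1a y, hy1.2])
    have g1b := lin_interp (a := -(α*η)) (c := β - ρ^2) hz.1 hz.2
      (by linarith [e1b x, hx1.1]) (by linarith [e1b y, hy1.1])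
    have g2 := lin_interp (a := α*η - α*(η+1)*ρ) (c := (β+1)*ρ - ρ^2 - β) hz.1 hz.2
      (by linarith [e2 x, hx2]) (by linarith [e2 y, hy2])
    have g3 := lin_interp (a := α*η + α*(η+1)*ρ) (c := -((β+1)*ρ) - ρ^2 - β) hz.1 hz.2
      (by linarith [e3 x, hx3]) (by linarith [e3 y, hy3])
    refine ⟨abs_lt.2 ⟨?_, ?_⟩, ?_, ?_⟩
    · linarith [e1b z, g1b]
    · linarith [e1a z, g1a]
    · linarith [e2 z, g2]
    · linarith [e3 z, g3]
  refine ⟨part1, ?_⟩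
  intro b
  rw [convex_iff_ordConnected]
  refine ⟨fun x hx y hy z hz => ?_⟩
  refine ⟨Set.mem_univ z, ?_⟩
  by_contra hb
  push_neg at hb
  have hfz : spectralRadius ℂ ((M z).map Complex.ofReal) ≠ ⊤ := (key z).1
  obtain ⟨r, hbr, hrf⟩ := exists_between hb
  have hrt : r ≠ ⊤ := ne_top_of_lt hrf
  have hr0 : 0 < r := lt_of_le_of_lt (zero_le : 0 ≤ b) hbr
  set ρ := r.toReal with hρdef
  have hρ : 0 < ρ := ENNReal.toReal_pos hr0.ne' hrt
  have hor : ENNReal.ofReal ρ = r := ENNReal.ofReal_toReal hrt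
  have hxm : x ∈ {q : ℝ | spectralRadius ℂ ((M q).map (Complex.ofReal)) < ENNReal.ofReal ρ} := by
    simp only [Set.mem_setOf_eq, hor]
    exact lt_of_le_of_lt hx.2 hbr
  have hym : y ∈ {q : ℝ | spectralRadius ℂ ((M q).map (Complex.ofReal)) < ENNReal.ofReal ρ} := by
    simp only [Set.mem_setOf_eq, hor]
    exact lt_of_le_of_lt hy.2 hbr
  have hzm := (part1 ρ hρ).out hxm hym hz
  simp only [Set.mem_setOf_eq, hor] at hzm
  exact absurd (hzm.trans hrf) (lt_irrefl _)
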